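/- Let A be a gauge field on the cube B such that dA(p) = 0 for every plaquette p contained in B and (τA)(x) = 0 for every x ∈ B. Then A(b) = 0 for every bond b in B. -/

import Mathlib

open Finset

noncomputable section

/-- Points of the lattice `ℤ³`. -/
abbrev Pt : Type := Fin 3 → ℤ

/-- The standard unit vector `e_μ`. -/
def unitVec (μ : Fin 3) : Pt := fun i => if i = μ then 1 else 0

/-- Membership in the cube `B = {x : |x i| ≤ (L-1)/2}` (for odd `L`). -/
def inCube (L : ℤ) (x : Pt) : Prop := ∀ i, |x i| ≤ (L - 1) / 2

/-- Shift a point by `k` steps in direction `μ`. -/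
def shiftPt (z : Pt) (μ : Fin 3) (k : ℤ) : Pt := fun i => if i = μ then z i + k else z i

/-- The sum of the gauge field `A` along the straight lattice path from `z` to `z + t·e_μ`. -/
def seg (A : Pt → Pt → ℝ) (z : Pt) (μ : Fin 3) (t : ℤ) : ℝ :=
  if 0 ≤ t then ∑ j ∈ Finset.range t.toNat, A (shiftPt z μ (j : ℤ)) (shiftPt z μ ((j : ℤ) + 1))
  else ∑ j ∈ Finset.range (-t).toNat, A (shiftPt z μ (-(j : ℤ))) (shiftPt z μ (-(j : ℤ) - 1))

/-- The field strength `dA` on the plaquette based at `x`, spanned by `e_μ, e_ν`. -/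
def plaq (A : Pt → Pt → ℝ) (x : Pt) (μ ν : Fin 3) : ℝ :=
  A x (x + unitVec μ) + A (x + unitVec μ) (x + unitVec μ + unitVec ν)
    + A (x + unitVec μ + unitVec ν) (x + unitVec ν) + A (x + unitVec ν) x

/-- The corner of the rectilinear path `Γ^π_{yx}` reached after the first `m` coordinate
moves: coordinates `π 0, …, π (m-1)` are already at their final values. -/
def interPt (y x : Pt) (π : Equiv.Perm (Fin 3)) (m : ℕ) : Pt :=
  fun i => if ((π.symm i : Fin 3) : ℕ) < m then x i else y i

/-- `A(Γ^π_{yx})`: the sum of `A` along the rectilinear path from `y` to `x` which moves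
the coordinates to their final values in the order `π 0, π 1, π 2`. -/
def gammaSum (A : Pt → Pt → ℝ) (π : Equiv.Perm (Fin 3)) (y x : Pt) : ℝ :=
  ∑ m : Fin 3, seg A (interPt y x π (m : ℕ)) (π m) (x (π m) - y (π m))

/-- `(τ⁰A)(x) = A(Γ_{0x})`, for the identity ordering of coordinates. -/
def tau0 (A : Pt → Pt → ℝ) (x : Pt) : ℝ := gammaSum A 1 0 x

/-- `(τA)(x) = (1/6) Σ_π A(Γ^π_{0x})`, averaged over the `3! = 6` permutations. -/
def tau (A : Pt → Pt → ℝ) (x : Pt) : ℝ :=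
  (1 / 6) * ∑ π : Equiv.Perm (Fin 3), gammaSum A π 0 x
section Helpers

variable (A : Pt → Pt → ℝ)

lemma shiftPt_zero (z : Pt) (μ : Fin 3) : shiftPt z μ 0 = z := by
  funext i; simp [shiftPt]

lemma shiftPt_succ (z : Pt) (μ : Fin 3) (t : ℤ) :
    shiftPt z μ t + unitVec μ = shiftPt z μ (t + 1) := by
  funext i; simp only [shiftPt, unitVec, Pi.add_apply]
  by_cases h : i = μ <;> simp [h] <;> ring

lemma seg_zero (z : Pt) (μ : Fin 3) : seg A z μ 0 = 0 := by
  simp [seg]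

lemma seg_add_one (hA : ∀ x x', A x x' = - A x' x) (z : Pt) (μ : Fin 3) (t : ℤ) :
    seg A z μ (t + 1) = seg A z μ t + A (shiftPt z μ t) (shiftPt z μ (t + 1)) := by
  rcases le_or_gt 0 t with ht | ht
  · rw [seg, seg, if_pos ht, if_pos (by omega)]
    have h1 : (t + 1).toNat = t.toNat + 1 := by omega
    rw [h1, Finset.sum_range_succ, Int.toNat_of_nonneg ht]
  · rcases eq_or_lt_of_le (by omega : t ≤ -1) with ht1 | ht1
    · subst ht1
      have h0 : (-1 : ℤ) + 1 = 0 := by norm_num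
      rw [h0, seg_zero, shiftPt_zero, seg, if_neg (by norm_num)]
      have h1 : (-(-1:ℤ)).toNat = 1 := rfl
      rw [h1, Finset.sum_range_one]
      have e1 : shiftPt z μ (-(0:ℕ)) = z := by rw [show (-(0:ℕ) : ℤ) = 0 by norm_num, shiftPt_zero]
      have e2 : shiftPt z μ (-(0:ℕ) - 1) = shiftPt z μ (-1) := by norm_num
      rw [e1, e2, hA z]
      ring
    · rw [seg, seg, if_neg (by omega), if_neg (by omega)]
      have h1 : (-t).toNat = (-(t+1)).toNat + 1 := by omega
      rw [h1, Finset.sum_range_succ]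
      have h2 : ((-(t+1)).toNat : ℤ) = -(t+1) := Int.toNat_of_nonneg (by omega)
      rw [h2]
      have e1 : shiftPt z μ (-(-(t + 1))) = shiftPt z μ (t+1) := by norm_num
      have e2 : shiftPt z μ (-(-(t + 1)) - 1) = shiftPt z μ t := by norm_num
      rw [e1, e2, hA (shiftPt z μ (t+1))]
      ring

end Helpers
section Strip

variable (A : Pt → Pt → ℝ) (L : ℤ)

lemma seg_sub_one (hA : ∀ x x', A x x' = - A x' x) (z : Pt) (μ : Fin 3) (t : ℤ) :
    seg A z μ (t - 1) = seg A z μ t - A (shiftPt z μ (t - 1)) (shiftPt z μ t) := by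
  have := seg_add_one A hA z μ (t - 1)
  rw [sub_add_cancel] at this
  rw [this]; ring

lemma inCube_shift (z : Pt) (μ : Fin 3) (t s : ℤ)
    (hz : inCube L z) (ht : inCube L (shiftPt z μ t))
    (hs : (0 ≤ s ∧ s ≤ t) ∨ (t ≤ s ∧ s ≤ 0)) : inCube L (shiftPt z μ s) := by
  intro i
  by_cases h : i = μ
  · subst h
    have h1 := hz i
    have h2 := ht i
    simp only [shiftPt, if_pos] at h2 ⊢
    rw [abs_le] at h1 h2 ⊢
    omega
  · have h1 := hz i
    simpa [shiftPt, h] using h1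

lemma strip (hA : ∀ x x', A x x' = - A x' x)
    (hdA : ∀ (x : Pt) (μ ν : Fin 3), μ ≠ ν →
      inCube L x → inCube L (x + unitVec μ) → inCube L (x + unitVec ν) →
      inCube L (x + unitVec μ + unitVec ν) → plaq A x μ ν = 0)
    (μ ν : Fin 3) (hμν : μ ≠ ν) (z : Pt) (hz : inCube L z) (hzν : inCube L (z + unitVec ν))
    (t : ℤ) (ht : inCube L (shiftPt z μ t)) (htν : inCube L (shiftPt z μ t + unitVec ν)) :
    seg A (z + unitVec ν) μ t =
      seg A z μ t - A z (z + unitVec ν) + A (shiftPt z μ t) (shiftPt z μ t + unitVec ν) := by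
  induction t using Int.induction_on with
  | zero => rw [shiftPt_zero] at *; rw [seg_zero, seg_zero]; ring
  | succ n ih =>
    have hmid : inCube L (shiftPt z μ n) :=
      inCube_shift L z μ (n+1) n hz ht (by omega)
    have hshiftν : ∀ s : ℤ, shiftPt z μ s + unitVec ν = shiftPt (z + unitVec ν) μ s := by
      intro s; funext i; simp only [shiftPt, Pi.add_apply, unitVec]
      by_cases h : i = μ <;> simp [h, Ne.symm hμν] <;> ring
    have hmidν : inCube L (shiftPt z μ n + unitVec ν) := by
      rw [hshiftν]
      rw [hshiftν] at htν
      exact inCube_shift L (z + unitVec ν) μ (n+1) n hzν htν (by omega)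
    have key := hdA (shiftPt z μ n) μ ν hμν hmid (by rw [shiftPt_succ]; exact ht)
      hmidν (by rw [shiftPt_succ]; exact htν)
    rw [plaq] at key
    rw [seg_add_one A hA, seg_add_one A hA, ih hmid hmidν]
    rw [← hshiftν, ← hshiftν, ← shiftPt_succ]
    have h1 := hA (shiftPt z μ n + unitVec μ + unitVec ν) (shiftPt z μ n + unitVec ν)
    have h2 := hA (shiftPt z μ n + unitVec ν) (shiftPt z μ n)
    linarith [key]
  | pred n ih =>
    have hmid : inCube L (shiftPt z μ (-n)) :=
      inCube_shift L z μ (-n-1) (-n) hz ht (by omega)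
    have hshiftν : ∀ s : ℤ, shiftPt z μ s + unitVec ν = shiftPt (z + unitVec ν) μ s := by
      intro s; funext i; simp only [shiftPt, Pi.add_apply, unitVec]
      by_cases h : i = μ <;> simp [h, Ne.symm hμν] <;> ring
    have hmidν : inCube L (shiftPt z μ (-n) + unitVec ν) := by
      rw [hshiftν]
      rw [hshiftν] at htν
      exact inCube_shift L (z + unitVec ν) μ (-n-1) (-n) hzν htν (by omega)
    have key := hdA (shiftPt z μ (-n-1)) μ ν hμν ht
      (by rw [shiftPt_succ, show (-(n:ℤ)-1)+1 = -n by ring]; exact hmid)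
      htν (by rw [shiftPt_succ, show (-(n:ℤ)-1)+1 = -n by ring]; exact hmidν)
    rw [plaq] at key
    rw [seg_sub_one A hA, seg_sub_one A hA, ih hmid hmidν]
    rw [← hshiftν, ← hshiftν]
    rw [show shiftPt z μ (-(n:ℤ)) = shiftPt z μ (-(n:ℤ)-1) + unitVec μ by
      rw [shiftPt_succ, show (-(n:ℤ)-1)+1 = -n by ring]]
    have h1 := hA (shiftPt z μ (-(n:ℤ)-1) + unitVec μ + unitVec ν) (shiftPt z μ (-(n:ℤ)-1) + unitVec ν)
    have h2 := hA (shiftPt z μ (-(n:ℤ)-1) + unitVec ν) (shiftPt z μ (-(n:ℤ)-1))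
    linarith [key]

end Strip
section Inter

variable (A : Pt → Pt → ℝ) (L : ℤ)

lemma interPt_id (y x : Pt) (m : ℕ) :
    interPt y x 1 m = fun i : Fin 3 => if (i : ℕ) < m then x i else y i := by
  funext i; simp [Equiv.Perm.one_symm, Equiv.Perm.one_apply, interPt]; rfl

lemma interPt_zero' (y x : Pt) (π : Equiv.Perm (Fin 3)) : interPt y x π 0 = y := by
  funext i; simp [interPt]

lemma interPt_three (y x : Pt) (π : Equiv.Perm (Fin 3)) : interPt y x π 3 = x := by
  funext i; simp [interPt, Fin.is_lt]

lemma inCube_interPt (y x : Pt) (π : Equiv.Perm (Fin 3)) (m : ℕ)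
    (hy : inCube L y) (hx : inCube L x) : inCube L (interPt y x π m) := by
  intro i; unfold interPt; split
  · exact hx i
  · exact hy i

lemma inCube_zero (hL3 : 3 ≤ L) : inCube L (0 : Pt) := by
  intro i; simp only [Pi.zero_apply, abs_zero]; omega

lemma interPt_succ (y x : Pt) (π : Equiv.Perm (Fin 3)) (m : Fin 3) :
    shiftPt (interPt y x π (m : ℕ)) (π m) (x (π m) - y (π m)) = interPt y x π ((m : ℕ) + 1) := by
  funext i
  by_cases h : i = π m
  · subst h
    have h1 : ¬ ((π.symm (π m) : Fin 3) : ℕ) < (m : ℕ) := by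
      rw [Equiv.symm_apply_apply]; exact lt_irrefl _
    have h2 : ((π.symm (π m) : Fin 3) : ℕ) < (m : ℕ) + 1 := by
      rw [Equiv.symm_apply_apply]; exact Nat.lt_succ_self _
    simp only [shiftPt, interPt, if_pos rfl, if_neg h1, if_pos h2, if_true]
    ring
  · have hne : π.symm i ≠ m := fun hc => h (by rw [← hc, Equiv.apply_symm_apply])
    have hvne : ((π.symm i : Fin 3) : ℕ) ≠ (m : ℕ) := fun hc => hne (Fin.val_injective hc)
    simp only [shiftPt, interPt, if_neg h]
    by_cases hlt : ((π.symm i : Fin 3) : ℕ) < (m : ℕ)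
    · rw [if_pos hlt, if_pos (by omega)]
    · rw [if_neg hlt, if_neg (by omega)]

lemma tau0_eq (x : Pt) : tau0 A x =
    seg A 0 0 (x 0) + seg A (interPt 0 x 1 1) 1 (x 1) + seg A (interPt 0 x 1 2) 2 (x 2) := by
  simp [tau0, gammaSum, Fin.sum_univ_three, interPt_zero']

end Inter
section Grad

variable (A : Pt → Pt → ℝ) (L : ℤ)

lemma grad (hL3 : 3 ≤ L)
    (hA : ∀ x x', A x x' = - A x' x)
    (hdA : ∀ (x : Pt) (μ ν : Fin 3), μ ≠ ν →
      inCube L x → inCube L (x + unitVec μ) → inCube L (x + unitVec ν) →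
      inCube L (x + unitVec μ + unitVec ν) → plaq A x μ ν = 0)
    (x : Pt) (μ : Fin 3) (hx : inCube L x) (hxμ : inCube L (x + unitVec μ)) :
    A x (x + unitVec μ) = tau0 A (x + unitVec μ) - tau0 A x := by
  have h0 : inCube L (0 : Pt) := inCube_zero L hL3
  fin_cases μ
  · -- μ = 0
    show A x (x + unitVec 0) = tau0 A (x + unitVec 0) - tau0 A x
    set x' := x + unitVec 0 with hx'
    have hx'0 : x' 0 = x 0 + 1 := by simp [hx', unitVec]
    have hx'1 : x' 1 = x 1 := by simp [hx', unitVec]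
    have hx'2 : x' 2 = x 2 := by simp [hx', unitVec]
    set c1 := interPt 0 x 1 1 with hc1d
    set c2 := interPt 0 x 1 2 with hc2d
    have hcc1 : inCube L c1 := inCube_interPt L 0 x 1 1 h0 hx
    have hcc2 : inCube L c2 := inCube_interPt L 0 x 1 2 h0 hx
    have hcc1' : inCube L (interPt 0 x' 1 1) := inCube_interPt L 0 x' 1 1 h0 hxμ
    have hcc2' : inCube L (interPt 0 x' 1 2) := inCube_interPt L 0 x' 1 2 h0 hxμ
    have e1 : shiftPt 0 0 (x 0) = c1 := by
      funext i; fin_cases i <;> simp [Equiv.Perm.one_symm, Equiv.Perm.one_apply, hc1d, hc2d, interPt, shiftPt, hx']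
    have e2 : shiftPt 0 0 (x 0 + 1) = interPt 0 x' 1 1 := by
      funext i; fin_cases i <;> simp [Equiv.Perm.one_symm, Equiv.Perm.one_apply, hc1d, hc2d, interPt, shiftPt, hx', unitVec]
    have e3 : interPt 0 x' 1 1 = c1 + unitVec 0 := by
      funext i; fin_cases i <;> simp [Equiv.Perm.one_symm, Equiv.Perm.one_apply, hc1d, hc2d, interPt, shiftPt, hx', unitVec]
    have e4 : shiftPt c1 1 (x 1) = c2 := by
      funext i; fin_cases i <;> simp [Equiv.Perm.one_symm, Equiv.Perm.one_apply, hc1d, hc2d, interPt, shiftPt]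
    have e5 : interPt 0 x' 1 2 = c2 + unitVec 0 := by
      funext i; fin_cases i <;> simp [Equiv.Perm.one_symm, Equiv.Perm.one_apply, hc1d, hc2d, interPt, shiftPt, hx', unitVec]
    have e6 : shiftPt c2 2 (x 2) = x := by
      funext i; fin_cases i <;> simp [Equiv.Perm.one_symm, Equiv.Perm.one_apply, hc1d, hc2d, interPt, shiftPt]
    have t1 := seg_add_one A hA 0 0 (x 0)
    rw [e1, e2, e3] at t1
    have s1 := strip A L hA hdA 1 0 (by decide) c1 hcc1 (by rw [← e3]; exact hcc1') (x 1)
      (by rw [e4]; exact hcc2) (by rw [e4, ← e5]; exact hcc2')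
    rw [e4] at s1
    have s2 := strip A L hA hdA 2 0 (by decide) c2 hcc2 (by rw [← e5]; exact hcc2') (x 2)
      (by rw [e6]; exact hx) (by rw [e6]; exact hxμ)
    rw [e6, ← hx'] at s2
    rw [tau0_eq A x', tau0_eq A x, hx'0, hx'1, hx'2, e3, e5, ← hc1d, ← hc2d]
    linarith [t1, s1, s2]
  · -- μ = 1
    show A x (x + unitVec 1) = tau0 A (x + unitVec 1) - tau0 A x
    set x' := x + unitVec 1 with hx'
    have hx'0 : x' 0 = x 0 := by simp [hx', unitVec]
    have hx'1 : x' 1 = x 1 + 1 := by simp [hx', unitVec]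
    have hx'2 : x' 2 = x 2 := by simp [hx', unitVec]
    set c1 := interPt 0 x 1 1 with hc1d
    set c2 := interPt 0 x 1 2 with hc2d
    have hcc1 : inCube L c1 := inCube_interPt L 0 x 1 1 h0 hx
    have hcc2 : inCube L c2 := inCube_interPt L 0 x 1 2 h0 hx
    have hcc2' : inCube L (interPt 0 x' 1 2) := inCube_interPt L 0 x' 1 2 h0 hxμ
    have e0 : interPt 0 x' 1 1 = c1 := by
      funext i; fin_cases i <;> simp [Equiv.Perm.one_symm, Equiv.Perm.one_apply, hc1d, hc2d, interPt, shiftPt, hx', unitVec]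
    have e4 : shiftPt c1 1 (x 1) = c2 := by
      funext i; fin_cases i <;> simp [Equiv.Perm.one_symm, Equiv.Perm.one_apply, hc1d, hc2d, interPt, shiftPt]
    have e4' : shiftPt c1 1 (x 1 + 1) = interPt 0 x' 1 2 := by
      funext i; fin_cases i <;> simp [Equiv.Perm.one_symm, Equiv.Perm.one_apply, hc1d, hc2d, interPt, shiftPt, hx', unitVec]
    have e5 : interPt 0 x' 1 2 = c2 + unitVec 1 := by
      funext i; fin_cases i <;> simp [Equiv.Perm.one_symm, Equiv.Perm.one_apply, hc1d, hc2d, interPt, shiftPt, hx', unitVec]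
    have e6 : shiftPt c2 2 (x 2) = x := by
      funext i; fin_cases i <;> simp [Equiv.Perm.one_symm, Equiv.Perm.one_apply, hc1d, hc2d, interPt, shiftPt]
    have t1 := seg_add_one A hA c1 1 (x 1)
    rw [e4, e4', e5] at t1
    have s2 := strip A L hA hdA 2 1 (by decide) c2 hcc2 (by rw [← e5]; exact hcc2') (x 2)
      (by rw [e6]; exact hx) (by rw [e6]; exact hxμ)
    rw [e6, ← hx'] at s2
    rw [tau0_eq A x', tau0_eq A x, hx'0, hx'1, hx'2, e0, e5, ← hc1d, ← hc2d]
    linarith [t1, s2]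
  · -- μ = 2
    show A x (x + unitVec 2) = tau0 A (x + unitVec 2) - tau0 A x
    set x' := x + unitVec 2 with hx'
    have hx'0 : x' 0 = x 0 := by simp [hx', unitVec]
    have hx'1 : x' 1 = x 1 := by simp [hx', unitVec]
    have hx'2 : x' 2 = x 2 + 1 := by simp [hx', unitVec]
    set c2 := interPt 0 x 1 2 with hc2d
    have e0 : interPt 0 x' 1 1 = interPt 0 x 1 1 := by
      funext i; fin_cases i <;> simp [Equiv.Perm.one_symm, Equiv.Perm.one_apply, hc2d, interPt, shiftPt, hx', unitVec]
    have e5 : interPt 0 x' 1 2 = c2 := by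
      funext i; fin_cases i <;> simp [Equiv.Perm.one_symm, Equiv.Perm.one_apply, hc2d, interPt, shiftPt, hx', unitVec]
    have e6 : shiftPt c2 2 (x 2) = x := by
      funext i; fin_cases i <;> simp [Equiv.Perm.one_symm, Equiv.Perm.one_apply, hc2d, interPt, shiftPt]
    have e6' : shiftPt c2 2 (x 2 + 1) = x' := by
      funext i; fin_cases i <;> simp [Equiv.Perm.one_symm, Equiv.Perm.one_apply, hc2d, interPt, shiftPt, hx', unitVec]
    have t1 := seg_add_one A hA c2 2 (x 2)
    rw [e6, e6'] at t1
    rw [tau0_eq A x', tau0_eq A x, hx'0, hx'1, hx'2, e0, e5, ← hc2d]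
    linarith [t1]

end Grad
section Final

variable (A : Pt → Pt → ℝ) (L : ℤ)

lemma seg_tau0 (hL3 : 3 ≤ L)
    (hA : ∀ x x', A x x' = - A x' x)
    (hdA : ∀ (x : Pt) (μ ν : Fin 3), μ ≠ ν →
      inCube L x → inCube L (x + unitVec μ) → inCube L (x + unitVec ν) →
      inCube L (x + unitVec μ + unitVec ν) → plaq A x μ ν = 0)
    (z : Pt) (μ : Fin 3) (t : ℤ) (hz : inCube L z) (ht : inCube L (shiftPt z μ t)) :
    seg A z μ t = tau0 A (shiftPt z μ t) - tau0 A z := by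
  induction t using Int.induction_on with
  | zero => rw [shiftPt_zero, seg_zero]; ring
  | succ n ih =>
    have hmid : inCube L (shiftPt z μ n) := inCube_shift L z μ (n+1) n hz ht (by omega)
    rw [seg_add_one A hA, ih hmid, ← shiftPt_succ,
      grad A L hL3 hA hdA (shiftPt z μ n) μ hmid (by rw [shiftPt_succ]; exact ht)]
    ring
  | pred n ih =>
    have hmid : inCube L (shiftPt z μ (-n)) := inCube_shift L z μ (-n-1) (-n) hz ht (by omega)
    have e : shiftPt z μ (-(n:ℤ)) = shiftPt z μ (-(n:ℤ)-1) + unitVec μ := by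
      rw [shiftPt_succ, show (-(n:ℤ)-1)+1 = -n by ring]
    rw [seg_sub_one A hA, ih hmid]
    rw [e, grad A L hL3 hA hdA (shiftPt z μ (-(n:ℤ)-1)) μ ht (by rw [← e]; exact hmid)]
    ring

lemma tau0_zero' : tau0 A 0 = 0 := by
  have h : ∀ m : ℕ, interPt (0 : Pt) 0 1 m = 0 := by
    intro m; funext i; simp [interPt]
  rw [tau0_eq]
  simp [h, seg_zero]

lemma gamma_tau0 (hL3 : 3 ≤ L)
    (hA : ∀ x x', A x x' = - A x' x)
    (hdA : ∀ (x : Pt) (μ ν : Fin 3), μ ≠ ν →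
      inCube L x → inCube L (x + unitVec μ) → inCube L (x + unitVec ν) →
      inCube L (x + unitVec μ + unitVec ν) → plaq A x μ ν = 0)
    (π : Equiv.Perm (Fin 3)) (x : Pt) (hx : inCube L x) :
    gammaSum A π 0 x = tau0 A x := by
  have h0 : inCube L (0 : Pt) := inCube_zero L hL3
  have key : ∀ m : Fin 3, seg A (interPt 0 x π (m : ℕ)) (π m) (x (π m) - (0 : Pt) (π m)) =
      tau0 A (interPt 0 x π ((m : ℕ) + 1)) - tau0 A (interPt 0 x π (m : ℕ)) := by
    intro m
    have h1 := seg_tau0 A L hL3 hA hdA (interPt 0 x π (m : ℕ)) (π m) (x (π m) - (0:Pt) (π m))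
      (inCube_interPt L 0 x π (m : ℕ) h0 hx)
      (by rw [interPt_succ]; exact inCube_interPt L 0 x π ((m : ℕ)+1) h0 hx)
    rw [h1, interPt_succ]
  rw [gammaSum, Fin.sum_univ_three, key 0, key 1, key 2]
  have hv0 : ((0 : Fin 3) : ℕ) = 0 := rfl
  have hv1 : ((1 : Fin 3) : ℕ) = 1 := rfl
  have hv2 : ((2 : Fin 3) : ℕ) = 2 := rfl
  rw [hv0, hv1, hv2, interPt_zero', interPt_three, tau0_zero']
  ring

end Final

/-- If a gauge field `A` on the cube `B` has vanishing field strength on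
every plaquette contained in `B` and `(τA)(x) = 0` for every `x ∈ B`, then `A` vanishes
on every bond of `B`. -/
theorem covariant_axial_gauge_rigidity (L : ℤ) (hL3 : 3 ≤ L) (hLodd : Odd L)
    (A : Pt → Pt → ℝ) (hA : ∀ x x', A x x' = - A x' x)
    (hdA : ∀ (x : Pt) (μ ν : Fin 3), μ ≠ ν →
      inCube L x → inCube L (x + unitVec μ) → inCube L (x + unitVec ν) →
      inCube L (x + unitVec μ + unitVec ν) → plaq A x μ ν = 0)
    (htau : ∀ x : Pt, inCube L x → tau A x = 0) :
    ∀ (x : Pt) (μ : Fin 3), inCube L x → inCube L (x + unitVec μ) →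
      A x (x + unitVec μ) = 0 := by
  intro x μ hx hxμ
  have htau0 : ∀ y, inCube L y → tau0 A y = 0 := by
    intro y hy
    have h := htau y hy
    rw [tau, Finset.sum_congr rfl (fun π _ => gamma_tau0 A L hL3 hA hdA π y hy),
      Finset.sum_const] at h
    have hcard : (Finset.univ : Finset (Equiv.Perm (Fin 3))).card = 6 := by
      rw [Finset.card_univ]; rw [Fintype.card_perm]; decide
    rw [hcard] at h
    simp only [nsmul_eq_mul, Nat.cast_ofNat] at h
    linarith
  rw [grad A L hL3 hA hdA x μ hx hxμ, htau0 _ hxμ, htau0 _ hx]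
  ring
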